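/- Let (M, C, T_l, T_r, Π, t, i) be an admissible septuple and w : T_r X → T_l X a transposition morphism, with associated para-cocyclic operators w_n := Π(T_l^n w) ∘ (t_n)_X ∘ i_{T_l^n X} on Z^n := Π(T_l^{n+1} X). Then for all n and 0 ≤ k ≤ n the coface d_k : Z^n → Z^{n+1} satisfies d_k ∘ (w_n)^{n+1} = (w_{n+1})^{n+2} ∘ d_k, and the codegeneracy s_k : Z^n → Z^{n-1} satisfies s_k ∘ (w_n)^{n+1} = (w_{n-1})^n ∘ s_k. Consequently, if for every n the coequalizer Ẑ^n of (w_n)^{n+1} and the identity of Z^n exists in C, then the maps d_k, s_k and w_n induce morphisms d̂_k, ŝ_k and ŵ_n on Ẑ^*, making Ẑ^* a cocyclic object (in particular (ŵ_n)^{n+1} = id). -/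

import Mathlib

/-!
Statement 5: For an admissible septuple and a transposition morphism `w`, the cofaces and
codegeneracies of `Z^* = Π T_l^{*+1} X` commute (suitably) with the powers
`(w_n)^{n+1}` of the para-cocyclic operators; consequently, if the coequalizer of
`(w_n)^{n+1}` and the identity exists for every `n`, then the maps `d_k`, `s_k`, `w_n`
induce morphisms on the coequalizers, with `(ŵ_n)^{n+1} = id`.
-/

open CategoryTheory

universe v u v' u'

namespace Stmt5

variable {M : Type u} [Category.{v} M]

/-- `fpow T n X` is the `n`-fold application `Tⁿ X`. -/
def fpow (T : M ⥤ M) : ℕ → M → M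
  | 0, X => X
  | n + 1, X => T.obj (fpow T n X)

/-- `coface T u X n k` represents the coface `d_k = Tᵏ (u_{T^{n-k} X}) : Tⁿ X ⟶ Tⁿ⁺¹ X`
(meaningful for `k ≤ n`). -/
def coface (T : M ⥤ M) (u : 𝟭 M ⟶ T) (X : M) : (n k : ℕ) → (fpow T n X ⟶ fpow T (n + 1) X)
  | n, 0 => u.app (fpow T n X)
  | n + 1, k + 1 => T.map (coface T u X n k)
  | 0, _ + 1 => u.app X

/-- `codeg T m X n k` represents the codegeneracy `s_k = Tᵏ (m_{T^{n-k} X}) : Tⁿ⁺² X ⟶ Tⁿ⁺¹ X`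
(meaningful for `k ≤ n`). -/
def codeg (T : M ⥤ M) (m : T ⋙ T ⟶ T) (X : M) : (n k : ℕ) → (fpow T (n + 2) X ⟶ fpow T (n + 1) X)
  | n, 0 => m.app (fpow T n X)
  | n + 1, k + 1 => T.map (codeg T m X n k)
  | 0, _ + 1 => m.app X

/-- The lifted distributive law
`t_n = T_l^{n-1} t ∘ ⋯ ∘ t T_l^{n-1} : T_r T_l^n X ⟶ T_l^n T_r X`. -/
def distIter (Tl Tr : M ⥤ M) (t : Tl ⋙ Tr ⟶ Tr ⋙ Tl) (X : M) :
    (n : ℕ) → (Tr.obj (fpow Tl n X) ⟶ fpow Tl n (Tr.obj X))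
  | 0 => 𝟙 (Tr.obj X)
  | n + 1 => t.app (fpow Tl n X) ≫ Tl.map (distIter Tl Tr t X n)

/-- `T_l^n w : T_l^n Y ⟶ T_l^{n+1} X` for `w : Y ⟶ T_l X`. -/
def transIter (T : M ⥤ M) {X Y : M} (w : Y ⟶ T.obj X) : (n : ℕ) → (fpow T n Y ⟶ fpow T (n + 1) X)
  | 0 => w
  | n + 1 => T.map (transIter T w n)

variable {C : Type u'} [Category.{v'} C]

/-- The para-cocyclic operator `w_n := Π(T_l^n w) ∘ (t_n)_X ∘ i_{T_l^n X}`. -/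
def paraOp (Tl Tr : M ⥤ M) (t : Tl ⋙ Tr ⟶ Tr ⋙ Tl) (P : M ⥤ C) (i : Tl ⋙ P ⟶ Tr ⋙ P)
    {X : M} (w : Tr.obj X ⟶ Tl.obj X) (n : ℕ) :
    P.obj (fpow Tl (n + 1) X) ⟶ P.obj (fpow Tl (n + 1) X) :=
  i.app (fpow Tl n X) ≫ P.map (distIter Tl Tr t X n ≫ transIter Tl w n)


/-- Iterated composition `g^n` of an endomorphism. -/
def iterComp {D : Type u'} [Category.{v'} D] {Z : D} (g : Z ⟶ Z) : ℕ → (Z ⟶ Z)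
  | 0 => 𝟙 Z
  | n + 1 => g ≫ iterComp g n

section AuxLemmas

variable {M : Type u} [Category.{v} M] {C : Type u'} [Category.{v'} C]
variable (Tl Tr : M ⥤ M) (ml : Tl ⋙ Tl ⟶ Tl) (ul : 𝟭 M ⟶ Tl)
  (mr : Tr ⋙ Tr ⟶ Tr) (ur : 𝟭 M ⟶ Tr)
  (P : M ⥤ C) (t : Tl ⋙ Tr ⟶ Tr ⋙ Tl) (i : Tl ⋙ P ⟶ Tr ⋙ P) (X : M)

theorem distIter_coface (ht₄ : ∀ Y : M, Tr.map (ul.app Y) ≫ t.app Y = ul.app (Tr.obj Y)) :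
    ∀ n k : ℕ, Tr.map (coface Tl ul X n k) ≫ distIter Tl Tr t X (n + 1) =
      distIter Tl Tr t X n ≫ coface Tl ul (Tr.obj X) n k
  | n, 0 => by
    have h := ul.naturality (distIter Tl Tr t X n)
    simp only [Functor.id_map] at h
    simp only [coface, distIter, ← Category.assoc, ht₄]
    exact ((Category.assoc _ _ _).symm.trans (eq_whisker (ht₄ (fpow Tl n X)) _)).trans h.symm
  | 0, k + 1 => by
    rw [show coface Tl ul X 0 (k + 1) = coface Tl ul X 0 0 from rfl,
      show coface Tl ul (Tr.obj X) 0 (k + 1) = coface Tl ul (Tr.obj X) 0 0 from rfl]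
    exact distIter_coface ht₄ 0 0
  | n + 1, k + 1 => by
    have hnat := t.naturality (coface Tl ul X n k)
    simp only [Functor.comp_map] at hnat
    have ih := distIter_coface ht₄ n k
    simp only [coface]
    show Tr.map (Tl.map (coface Tl ul X n k)) ≫ t.app (fpow Tl (n + 1) X) ≫
        Tl.map (distIter Tl Tr t X (n + 1)) =
      distIter Tl Tr t X (n + 1) ≫ Tl.map (coface Tl ul (Tr.obj X) n k)
    rw [← Category.assoc, hnat, Category.assoc, ← Tl.map_comp, ih, Tl.map_comp]
    show t.app (fpow Tl n X) ≫ Tl.map (distIter Tl Tr t X n) ≫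
        Tl.map (coface Tl ul (Tr.obj X) n k) = _
    simp only [distIter, Category.assoc]
    exact (Category.assoc _ _ _).symm

theorem transIter_coface {Y : M} (w : Tr.obj Y ⟶ Tl.obj Y) :
    ∀ n k : ℕ, k ≤ n → coface Tl ul (Tr.obj Y) n k ≫ transIter Tl w (n + 1) =
      transIter Tl w n ≫ coface Tl ul Y (n + 1) k
  | n, 0, _ => by
    have h := ul.naturality (transIter Tl w n)
    simp only [Functor.id_map] at h
    simp only [coface]
    exact h.symm
  | n + 1, k + 1, hk => by
    have ih := transIter_coface w n k (Nat.le_of_succ_le_succ hk)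
    simp only [coface]
    show Tl.map (coface Tl ul (Tr.obj Y) n k) ≫ Tl.map (transIter Tl w (n + 1)) =
      Tl.map (transIter Tl w n) ≫ Tl.map (coface Tl ul Y (n + 1) k)
    rw [← Tl.map_comp, ← Tl.map_comp, ih]

theorem distIter_codeg
    (ht₂ : ∀ Y : M, Tr.map (ml.app Y) ≫ t.app Y =
      t.app (Tl.obj Y) ≫ Tl.map (t.app Y) ≫ ml.app (Tr.obj Y)) :
    ∀ n k : ℕ, Tr.map (codeg Tl ml X n k) ≫ distIter Tl Tr t X (n + 1) =
      distIter Tl Tr t X (n + 2) ≫ codeg Tl ml (Tr.obj X) n k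
  | n, 0 => by
    have h := ml.naturality (distIter Tl Tr t X n)
    simp only [Functor.comp_map] at h
    simp only [codeg]
    show Tr.map (ml.app (fpow Tl n X)) ≫ t.app (fpow Tl n X) ≫ Tl.map (distIter Tl Tr t X n) =
      distIter Tl Tr t X (n + 2) ≫ ml.app (fpow Tl n (Tr.obj X))
    rw [← Category.assoc, ht₂]
    show (t.app (Tl.obj (fpow Tl n X)) ≫ Tl.map (t.app (fpow Tl n X)) ≫
        ml.app (Tr.obj (fpow Tl n X))) ≫ Tl.map (distIter Tl Tr t X n) =
      (t.app (fpow Tl (n + 1) X) ≫ Tl.map (distIter Tl Tr t X (n + 1))) ≫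
        ml.app (fpow Tl n (Tr.obj X))
    simp only [Category.assoc, ← h]
    simp only [distIter, Functor.map_comp, Category.assoc]
    exact ((Category.assoc _ _ _).trans ((whisker_eq _ (eq_whisker (Tl.map_comp
      (t.app (fpow Tl n X)) (Tl.map (distIter Tl Tr t X n))) _)).trans
      (whisker_eq _ (Category.assoc _ _ _)))).symm
  | 0, k + 1 => by
    rw [show codeg Tl ml X 0 (k + 1) = codeg Tl ml X 0 0 from rfl,
      show codeg Tl ml (Tr.obj X) 0 (k + 1) = codeg Tl ml (Tr.obj X) 0 0 from rfl]
    exact distIter_codeg ht₂ 0 0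
  | n + 1, k + 1 => by
    have hnat := t.naturality (codeg Tl ml X n k)
    simp only [Functor.comp_map] at hnat
    have ih := distIter_codeg ht₂ n k
    simp only [codeg]
    show Tr.map (Tl.map (codeg Tl ml X n k)) ≫ t.app (fpow Tl (n + 1) X) ≫
        Tl.map (distIter Tl Tr t X (n + 1)) =
      distIter Tl Tr t X (n + 3) ≫ Tl.map (codeg Tl ml (Tr.obj X) n k)
    rw [← Category.assoc, hnat, Category.assoc, ← Tl.map_comp, ih, Tl.map_comp]
    show t.app (fpow Tl (n + 2) X) ≫ Tl.map (distIter Tl Tr t X (n + 2)) ≫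
        Tl.map (codeg Tl ml (Tr.obj X) n k) =
      distIter Tl Tr t X (n + 3) ≫ Tl.map (codeg Tl ml (Tr.obj X) n k)
    simp only [distIter, Category.assoc]
    exact (Category.assoc _ _ _).symm

theorem transIter_codeg {Y : M} (w : Tr.obj Y ⟶ Tl.obj Y) :
    ∀ n k : ℕ, k ≤ n → codeg Tl ml (Tr.obj Y) n k ≫ transIter Tl w (n + 1) =
      transIter Tl w (n + 2) ≫ codeg Tl ml Y (n + 1) k
  | n, 0, _ => by
    have h := ml.naturality (transIter Tl w n)
    simp only [Functor.comp_map] at h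
    simp only [codeg]
    exact h.symm
  | n + 1, k + 1, hk => by
    have ih := transIter_codeg w n k (Nat.le_of_succ_le_succ hk)
    simp only [codeg]
    show Tl.map (codeg Tl ml (Tr.obj Y) n k) ≫ Tl.map (transIter Tl w (n + 1)) =
      Tl.map (transIter Tl w (n + 2)) ≫ Tl.map (codeg Tl ml Y (n + 1) k)
    rw [← Tl.map_comp, ← Tl.map_comp, ih]

theorem ur_distIter_transIter {Y : M} (w : Tr.obj Y ⟶ Tl.obj Y)
    (ht₃ : ∀ Z : M, ur.app (Tl.obj Z) ≫ t.app Z = Tl.map (ur.app Z))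
    (hw₁ : ur.app Y ≫ w = ul.app Y) :
    ∀ n : ℕ, ur.app (fpow Tl n Y) ≫ distIter Tl Tr t Y n ≫ transIter Tl w n =
      coface Tl ul Y n n
  | 0 => by
    simp only [coface, distIter, transIter, fpow, Category.id_comp]
    exact hw₁
  | n + 1 => by
    have ih := ur_distIter_transIter w ht₃ hw₁ n
    show ur.app (Tl.obj (fpow Tl n Y)) ≫ (t.app (fpow Tl n Y) ≫
        Tl.map (distIter Tl Tr t Y n)) ≫ Tl.map (transIter Tl w n) =
      Tl.map (coface Tl ul Y n n)
    rw [← Category.assoc, ← Category.assoc, ht₃, Category.assoc, ← Tl.map_comp, ← Tl.map_comp,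
      ← Category.assoc]
    simp only [Category.assoc]
    rw [ih]

theorem mr_distIter_transIter {Y : M} (w : Tr.obj Y ⟶ Tl.obj Y)
    (ht₁ : ∀ Z : M, mr.app (Tl.obj Z) ≫ t.app Z =
      Tr.map (t.app Z) ≫ t.app (Tr.obj Z) ≫ Tl.map (mr.app Z))
    (hw₂ : mr.app Y ≫ w = Tr.map w ≫ t.app Y ≫ Tl.map w ≫ ml.app Y) :
    ∀ n : ℕ, mr.app (fpow Tl n Y) ≫ distIter Tl Tr t Y n ≫ transIter Tl w n =
      Tr.map (distIter Tl Tr t Y n ≫ transIter Tl w n) ≫ distIter Tl Tr t Y (n + 1) ≫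
        transIter Tl w (n + 1) ≫ codeg Tl ml Y n n
  | 0 => by
    simp only [coface, distIter, transIter, fpow, codeg, Category.id_comp, Functor.map_id,
      Functor.map_comp, Category.comp_id, Category.assoc]
    rw [hw₂]
    simp
  | n + 1 => by
    have ih := mr_distIter_transIter w ht₁ hw₂ n
    have hnat := t.naturality (distIter Tl Tr t Y n ≫ transIter Tl w n)
    simp only [Functor.comp_map] at hnat
    show mr.app (Tl.obj (fpow Tl n Y)) ≫ (t.app (fpow Tl n Y) ≫
        Tl.map (distIter Tl Tr t Y n)) ≫ Tl.map (transIter Tl w n) =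
      Tr.map ((t.app (fpow Tl n Y) ≫ Tl.map (distIter Tl Tr t Y n)) ≫
          Tl.map (transIter Tl w n)) ≫
        (t.app (fpow Tl (n + 1) Y) ≫ Tl.map (distIter Tl Tr t Y (n + 1))) ≫
        Tl.map (transIter Tl w (n + 1)) ≫ Tl.map (codeg Tl ml Y n n)
    calc mr.app (Tl.obj (fpow Tl n Y)) ≫ (t.app (fpow Tl n Y) ≫
        Tl.map (distIter Tl Tr t Y n)) ≫ Tl.map (transIter Tl w n)
        = (mr.app (Tl.obj (fpow Tl n Y)) ≫ t.app (fpow Tl n Y)) ≫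
            Tl.map (distIter Tl Tr t Y n ≫ transIter Tl w n) := by
          simp only [Functor.map_comp, Category.assoc]
      _ = Tr.map (t.app (fpow Tl n Y)) ≫ t.app (Tr.obj (fpow Tl n Y)) ≫
            Tl.map (mr.app (fpow Tl n Y) ≫ distIter Tl Tr t Y n ≫ transIter Tl w n) := by
          rw [ht₁]
          simp only [Functor.map_comp, Category.assoc]
      _ = Tr.map (t.app (fpow Tl n Y)) ≫ t.app (Tr.obj (fpow Tl n Y)) ≫
            Tl.map (Tr.map (distIter Tl Tr t Y n ≫ transIter Tl w n)) ≫
            Tl.map (distIter Tl Tr t Y (n + 1) ≫ transIter Tl w (n + 1) ≫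
              codeg Tl ml Y n n) := by
          rw [ih]
          simp only [Functor.map_comp, Category.assoc]
      _ = Tr.map (t.app (fpow Tl n Y)) ≫
            (Tr.map (Tl.map (distIter Tl Tr t Y n ≫ transIter Tl w n)) ≫
              t.app (fpow Tl (n + 1) Y)) ≫
            Tl.map (distIter Tl Tr t Y (n + 1) ≫ transIter Tl w (n + 1) ≫
              codeg Tl ml Y n n) := by
          rw [hnat]
          simp only [Category.assoc]
      _ = Tr.map ((t.app (fpow Tl n Y) ≫ Tl.map (distIter Tl Tr t Y n)) ≫
            Tl.map (transIter Tl w n)) ≫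
            (t.app (fpow Tl (n + 1) Y) ≫ Tl.map (distIter Tl Tr t Y (n + 1))) ≫
            Tl.map (transIter Tl w (n + 1)) ≫ Tl.map (codeg Tl ml Y n n) := by
          simp only [Functor.map_comp, Category.assoc]

theorem coface_zero (T : M ⥤ M) (u : 𝟭 M ⟶ T) (Y : M) (n : ℕ) :
    coface T u Y n 0 = u.app (fpow T n Y) := by cases n <;> rfl

theorem codeg_zero (T : M ⥤ M) (m : T ⋙ T ⟶ T) (Y : M) (n : ℕ) :
    codeg T m Y n 0 = m.app (fpow T n Y) := by cases n <;> rfl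

variable {X} in
theorem relA (w : Tr.obj X ⟶ Tl.obj X)
    (ht₄ : ∀ Y : M, Tr.map (ul.app Y) ≫ t.app Y = ul.app (Tr.obj Y))
    (n k : ℕ) (hk : k ≤ n) :
    P.map (coface Tl ul X (n + 1) (k + 1)) ≫ paraOp Tl Tr t P i w (n + 1) =
      paraOp Tl Tr t P i w n ≫ P.map (coface Tl ul X (n + 1) k) := by
  have hnat := i.naturality (coface Tl ul X n k)
  simp only [Functor.comp_map] at hnat
  show P.map (Tl.map (coface Tl ul X n k)) ≫ i.app (fpow Tl (n + 1) X) ≫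
      P.map (distIter Tl Tr t X (n + 1) ≫ transIter Tl w (n + 1)) =
    (i.app (fpow Tl n X) ≫ P.map (distIter Tl Tr t X n ≫ transIter Tl w n)) ≫
      P.map (coface Tl ul X (n + 1) k)
  rw [← Category.assoc, hnat, Category.assoc, ← P.map_comp, ← Category.assoc,
    distIter_coface Tl Tr ul t X ht₄ n k, Category.assoc,
    transIter_coface Tl Tr ul w n k hk]
  simp only [Functor.map_comp, Category.assoc]

variable {X} in
theorem relB (w : Tr.obj X ⟶ Tl.obj X)
    (ht₃ : ∀ Z : M, ur.app (Tl.obj Z) ≫ t.app Z = Tl.map (ur.app Z))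
    (hi₁ : ∀ Y : M, P.map (ul.app Y) ≫ i.app Y = P.map (ur.app Y))
    (hw₁ : ur.app X ≫ w = ul.app X) (n : ℕ) :
    P.map (coface Tl ul X (n + 1) 0) ≫ paraOp Tl Tr t P i w (n + 1) =
      P.map (coface Tl ul X (n + 1) (n + 1)) := by
  rw [coface_zero]
  show P.map (ul.app (fpow Tl (n + 1) X)) ≫ i.app (fpow Tl (n + 1) X) ≫
      P.map (distIter Tl Tr t X (n + 1) ≫ transIter Tl w (n + 1)) = _
  rw [← Category.assoc, hi₁, ← P.map_comp]
  congr 1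
  exact ur_distIter_transIter Tl Tr ul ur t w ht₃ hw₁ (n + 1)

variable {X} in
theorem relC (w : Tr.obj X ⟶ Tl.obj X)
    (ht₂ : ∀ Y : M, Tr.map (ml.app Y) ≫ t.app Y =
      t.app (Tl.obj Y) ≫ Tl.map (t.app Y) ≫ ml.app (Tr.obj Y))
    (n k : ℕ) (hk : k ≤ n) :
    P.map (codeg Tl ml X (n + 1) (k + 1)) ≫ paraOp Tl Tr t P i w (n + 1) =
      paraOp Tl Tr t P i w (n + 2) ≫ P.map (codeg Tl ml X (n + 1) k) := by
  have hnat := i.naturality (codeg Tl ml X n k)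
  simp only [Functor.comp_map] at hnat
  show P.map (Tl.map (codeg Tl ml X n k)) ≫ i.app (fpow Tl (n + 1) X) ≫
      P.map (distIter Tl Tr t X (n + 1) ≫ transIter Tl w (n + 1)) =
    (i.app (fpow Tl (n + 2) X) ≫ P.map (distIter Tl Tr t X (n + 2) ≫ transIter Tl w (n + 2))) ≫
      P.map (codeg Tl ml X (n + 1) k)
  rw [← Category.assoc, hnat, Category.assoc, ← P.map_comp, ← Category.assoc,
    distIter_codeg Tl Tr ml t X ht₂ n k, Category.assoc,
    transIter_codeg Tl Tr ml w n k hk]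
  simp only [Functor.map_comp, Category.assoc]

variable {X} in
theorem relD (w : Tr.obj X ⟶ Tl.obj X)
    (ht₁ : ∀ Z : M, mr.app (Tl.obj Z) ≫ t.app Z =
      Tr.map (t.app Z) ≫ t.app (Tr.obj Z) ≫ Tl.map (mr.app Z))
    (hi₂ : ∀ Y : M, P.map (ml.app Y) ≫ i.app Y =
      i.app (Tl.obj Y) ≫ P.map (t.app Y) ≫ i.app (Tr.obj Y) ≫ P.map (mr.app Y))
    (hw₂ : mr.app X ≫ w = Tr.map w ≫ t.app X ≫ Tl.map w ≫ ml.app X) (n : ℕ) :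
    P.map (codeg Tl ml X n 0) ≫ paraOp Tl Tr t P i w n =
      paraOp Tl Tr t P i w (n + 1) ≫ paraOp Tl Tr t P i w (n + 1) ≫
        P.map (codeg Tl ml X n n) := by
  have hnat := i.naturality (distIter Tl Tr t X n ≫ transIter Tl w n)
  simp only [Functor.comp_map] at hnat
  rw [codeg_zero]
  show P.map (ml.app (fpow Tl n X)) ≫ i.app (fpow Tl n X) ≫
      P.map (distIter Tl Tr t X n ≫ transIter Tl w n) =
    (i.app (fpow Tl (n + 1) X) ≫
      P.map (distIter Tl Tr t X (n + 1) ≫ transIter Tl w (n + 1))) ≫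
    (i.app (fpow Tl (n + 1) X) ≫
      P.map (distIter Tl Tr t X (n + 1) ≫ transIter Tl w (n + 1))) ≫
      P.map (codeg Tl ml X n n)
  rw [← Category.assoc, hi₂]
  calc (i.app (Tl.obj (fpow Tl n X)) ≫ P.map (t.app (fpow Tl n X)) ≫
        i.app (Tr.obj (fpow Tl n X)) ≫ P.map (mr.app (fpow Tl n X))) ≫
        P.map (distIter Tl Tr t X n ≫ transIter Tl w n)
      = i.app (Tl.obj (fpow Tl n X)) ≫ P.map (t.app (fpow Tl n X)) ≫
        i.app (Tr.obj (fpow Tl n X)) ≫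
        P.map (mr.app (fpow Tl n X) ≫ distIter Tl Tr t X n ≫ transIter Tl w n) := by
        simp only [Functor.map_comp, Category.assoc]
    _ = i.app (Tl.obj (fpow Tl n X)) ≫ P.map (t.app (fpow Tl n X)) ≫
        (i.app (Tr.obj (fpow Tl n X)) ≫
          P.map (Tr.map (distIter Tl Tr t X n ≫ transIter Tl w n))) ≫
        P.map (distIter Tl Tr t X (n + 1) ≫ transIter Tl w (n + 1)) ≫
        P.map (codeg Tl ml X n n) := by
        rw [mr_distIter_transIter Tl Tr ml mr t w ht₁ hw₂ n]
        simp only [Functor.map_comp, Category.assoc]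
    _ = i.app (Tl.obj (fpow Tl n X)) ≫ P.map (t.app (fpow Tl n X)) ≫
        (P.map (Tl.map (distIter Tl Tr t X n ≫ transIter Tl w n)) ≫
          i.app (fpow Tl (n + 1) X)) ≫
        P.map (distIter Tl Tr t X (n + 1) ≫ transIter Tl w (n + 1)) ≫
        P.map (codeg Tl ml X n n) := by rw [hnat]
    _ = (i.app (Tl.obj (fpow Tl n X)) ≫
        P.map (t.app (fpow Tl n X) ≫ Tl.map (distIter Tl Tr t X n) ≫
          Tl.map (transIter Tl w n))) ≫
        (i.app (fpow Tl (n + 1) X) ≫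
          P.map (distIter Tl Tr t X (n + 1) ≫ transIter Tl w (n + 1))) ≫
        P.map (codeg Tl ml X n n) := by
        simp only [Functor.map_comp, Category.assoc]
    _ = (i.app (Tl.obj (fpow Tl n X)) ≫
        P.map (distIter Tl Tr t X (n + 1) ≫ transIter Tl w (n + 1))) ≫
        (i.app (fpow Tl (n + 1) X) ≫
          P.map (distIter Tl Tr t X (n + 1) ≫ transIter Tl w (n + 1))) ≫
        P.map (codeg Tl ml X n n) := by
        congr 2
        rw [show distIter Tl Tr t X (n + 1) =
            t.app (fpow Tl n X) ≫ Tl.map (distIter Tl Tr t X n) from rfl,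
          show transIter Tl w (n + 1) = Tl.map (transIter Tl w n) from rfl]
        simp only [Functor.map_comp, Category.assoc]
        exact ((P.map_comp _ _).trans ((eq_whisker (P.map_comp _ _) _).trans
          (Category.assoc _ _ _))).symm

theorem iterComp_add {D : Type u'} [Category.{v'} D] {Z : D} (g : Z ⟶ Z) (a b : ℕ) :
    iterComp g (a + b) = iterComp g a ≫ iterComp g b := by
  induction a with
  | zero => rw [Nat.zero_add]; exact (Category.id_comp _).symm
  | succ a ih =>
    rw [show a + 1 + b = (a + b) + 1 by omega]
    show g ≫ iterComp g (a + b) = (g ≫ iterComp g a) ≫ iterComp g b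
    rw [ih, Category.assoc]

theorem iterComp_comm {D : Type u'} [Category.{v'} D] {Z : D} (g : Z ⟶ Z) (m : ℕ) :
    iterComp g m ≫ g = g ≫ iterComp g m := by
  induction m with
  | zero => rw [iterComp, Category.id_comp, Category.comp_id]
  | succ m ih =>
    show (g ≫ iterComp g m) ≫ g = g ≫ g ≫ iterComp g m
    rw [Category.assoc, ih]

variable {X} in
theorem slideD (w : Tr.obj X ⟶ Tl.obj X)
    (ht₄ : ∀ Y : M, Tr.map (ul.app Y) ≫ t.app Y = ul.app (Tr.obj Y)) (n : ℕ) :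
    ∀ j k : ℕ, k + j ≤ n + 1 →
    P.map (coface Tl ul X (n + 1) (k + j)) ≫ iterComp (paraOp Tl Tr t P i w (n + 1)) j =
      iterComp (paraOp Tl Tr t P i w n) j ≫ P.map (coface Tl ul X (n + 1) k)
  | 0, k, _ => by
    show P.map (coface Tl ul X (n + 1) k) ≫ 𝟙 _ = 𝟙 _ ≫ P.map (coface Tl ul X (n + 1) k)
    rw [Category.id_comp, Category.comp_id]
  | j + 1, k, h => by
    have ih := slideD w ht₄ n j k (by omega)
    have hA := relA Tl Tr ul P t i w ht₄ n (k + j) (by omega)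
    show P.map (coface Tl ul X (n + 1) (k + j + 1)) ≫ paraOp Tl Tr t P i w (n + 1) ≫
        iterComp (paraOp Tl Tr t P i w (n + 1)) j =
      (paraOp Tl Tr t P i w n ≫ iterComp (paraOp Tl Tr t P i w n) j) ≫
        P.map (coface Tl ul X (n + 1) k)
    rw [← Category.assoc, hA, Category.assoc, ih]
    simp only [Category.assoc]

variable {X} in
theorem slideS (w : Tr.obj X ⟶ Tl.obj X)
    (ht₂ : ∀ Y : M, Tr.map (ml.app Y) ≫ t.app Y =
      t.app (Tl.obj Y) ≫ Tl.map (t.app Y) ≫ ml.app (Tr.obj Y)) (n : ℕ) :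
    ∀ j k : ℕ, k + j ≤ n →
    P.map (codeg Tl ml X n (k + j)) ≫ iterComp (paraOp Tl Tr t P i w n) j =
      iterComp (paraOp Tl Tr t P i w (n + 1)) j ≫ P.map (codeg Tl ml X n k)
  | 0, k, _ => by
    show P.map (codeg Tl ml X n k) ≫ 𝟙 _ = 𝟙 _ ≫ P.map (codeg Tl ml X n k)
    rw [Category.id_comp, Category.comp_id]
  | j + 1, k, h => by
    obtain ⟨n', rfl⟩ : ∃ n', n = n' + 1 := ⟨n - 1, by omega⟩
    have ih := slideS w ht₂ (n' + 1) j k (by omega)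
    have hC := relC Tl Tr ml P t i w ht₂ n' (k + j) (by omega)
    show P.map (codeg Tl ml X (n' + 1) (k + j + 1)) ≫ paraOp Tl Tr t P i w (n' + 1) ≫
        iterComp (paraOp Tl Tr t P i w (n' + 1)) j =
      (paraOp Tl Tr t P i w (n' + 2) ≫ iterComp (paraOp Tl Tr t P i w (n' + 2)) j) ≫
        P.map (codeg Tl ml X (n' + 1) k)
    rw [← Category.assoc, hC, Category.assoc, ih]
    simp only [Category.assoc]

variable {X} in
theorem powD (w : Tr.obj X ⟶ Tl.obj X)
    (ht₃ : ∀ Z : M, ur.app (Tl.obj Z) ≫ t.app Z = Tl.map (ur.app Z))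
    (ht₄ : ∀ Y : M, Tr.map (ul.app Y) ≫ t.app Y = ul.app (Tr.obj Y))
    (hi₁ : ∀ Y : M, P.map (ul.app Y) ≫ i.app Y = P.map (ur.app Y))
    (hw₁ : ur.app X ≫ w = ul.app X)
    (n k : ℕ) (hk : k ≤ n + 1) :
    P.map (coface Tl ul X (n + 1) k) ≫ iterComp (paraOp Tl Tr t P i w (n + 1)) (n + 2) =
      iterComp (paraOp Tl Tr t P i w n) (n + 1) ≫ P.map (coface Tl ul X (n + 1) k) := by
  obtain ⟨r, hr⟩ : ∃ r, k + r = n + 1 := ⟨n + 1 - k, by omega⟩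
  have h1 := slideD Tl Tr ul P t i w ht₄ n k 0 (by omega)
  rw [Nat.zero_add] at h1
  have h2 := relB Tl Tr ul ur P t i w ht₃ hi₁ hw₁ n
  have h3 := slideD Tl Tr ul P t i w ht₄ n r k (by omega)
  rw [hr] at h3
  have e1 : iterComp (paraOp Tl Tr t P i w (n + 1)) (n + 2) =
      iterComp (paraOp Tl Tr t P i w (n + 1)) k ≫ paraOp Tl Tr t P i w (n + 1) ≫
        iterComp (paraOp Tl Tr t P i w (n + 1)) r := by
    rw [congrArg (iterComp (paraOp Tl Tr t P i w (n + 1))) (show n + 2 = k + (r + 1) by omega),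
      iterComp_add]
    rfl
  have e2 : iterComp (paraOp Tl Tr t P i w n) (n + 1) =
      iterComp (paraOp Tl Tr t P i w n) k ≫ iterComp (paraOp Tl Tr t P i w n) r := by
    rw [congrArg (iterComp (paraOp Tl Tr t P i w n)) (show n + 1 = k + r by omega), iterComp_add]
  have h2r : P.map (coface Tl ul X (n + 1) 0) ≫ paraOp Tl Tr t P i w (n + 1) ≫
      iterComp (paraOp Tl Tr t P i w (n + 1)) r =
      P.map (coface Tl ul X (n + 1) (n + 1)) ≫ iterComp (paraOp Tl Tr t P i w (n + 1)) r := by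
    rw [← Category.assoc, h2]
  rw [e1, e2, ← Category.assoc, h1, Category.assoc, h2r, h3, ← Category.assoc]

variable {X} in
theorem powS (w : Tr.obj X ⟶ Tl.obj X)
    (ht₁ : ∀ Z : M, mr.app (Tl.obj Z) ≫ t.app Z =
      Tr.map (t.app Z) ≫ t.app (Tr.obj Z) ≫ Tl.map (mr.app Z))
    (ht₂ : ∀ Y : M, Tr.map (ml.app Y) ≫ t.app Y =
      t.app (Tl.obj Y) ≫ Tl.map (t.app Y) ≫ ml.app (Tr.obj Y))
    (hi₂ : ∀ Y : M, P.map (ml.app Y) ≫ i.app Y =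
      i.app (Tl.obj Y) ≫ P.map (t.app Y) ≫ i.app (Tr.obj Y) ≫ P.map (mr.app Y))
    (hw₂ : mr.app X ≫ w = Tr.map w ≫ t.app X ≫ Tl.map w ≫ ml.app X)
    (n k : ℕ) (hk : k ≤ n) :
    P.map (codeg Tl ml X n k) ≫ iterComp (paraOp Tl Tr t P i w n) (n + 1) =
      iterComp (paraOp Tl Tr t P i w (n + 1)) (n + 2) ≫ P.map (codeg Tl ml X n k) := by
  obtain ⟨r, hr⟩ : ∃ r, k + r = n := ⟨n - k, by omega⟩
  have h1 := slideS Tl Tr ml P t i w ht₂ n k 0 (by omega)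
  rw [Nat.zero_add] at h1
  have h2 := relD Tl Tr ml mr P t i w ht₁ hi₂ hw₂ n
  have h3 := slideS Tl Tr ml P t i w ht₂ n r k (by omega)
  rw [hr] at h3
  have e1 : iterComp (paraOp Tl Tr t P i w n) (n + 1) =
      iterComp (paraOp Tl Tr t P i w n) k ≫ paraOp Tl Tr t P i w n ≫
        iterComp (paraOp Tl Tr t P i w n) r := by
    rw [congrArg (iterComp (paraOp Tl Tr t P i w n)) (show n + 1 = k + (r + 1) by omega),
      iterComp_add]
    rfl
  have e2 : iterComp (paraOp Tl Tr t P i w (n + 1)) (n + 2) =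
      iterComp (paraOp Tl Tr t P i w (n + 1)) k ≫ paraOp Tl Tr t P i w (n + 1) ≫
        paraOp Tl Tr t P i w (n + 1) ≫ iterComp (paraOp Tl Tr t P i w (n + 1)) r := by
    rw [congrArg (iterComp (paraOp Tl Tr t P i w (n + 1))) (show n + 2 = k + (r + 2) by omega),
      iterComp_add]
    rfl
  have h2r : P.map (codeg Tl ml X n 0) ≫ paraOp Tl Tr t P i w n ≫
      iterComp (paraOp Tl Tr t P i w n) r =
      paraOp Tl Tr t P i w (n + 1) ≫ paraOp Tl Tr t P i w (n + 1) ≫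
        P.map (codeg Tl ml X n n) ≫ iterComp (paraOp Tl Tr t P i w n) r := by
    rw [← Category.assoc, h2]
    simp only [Category.assoc]
  rw [e1, e2, ← Category.assoc, h1, Category.assoc, h2r, h3]
  simp only [Category.assoc]

theorem iterComp_congr {D : Type u'} [Category.{v'} D] {Z Q : D} {g : Z ⟶ Z} {p : Z ⟶ Q}
    {gh : Q ⟶ Q} (h : g ≫ p = p ≫ gh) : ∀ m, iterComp g m ≫ p = p ≫ iterComp gh m
  | 0 => by
    show 𝟙 _ ≫ p = p ≫ 𝟙 _
    rw [Category.id_comp, Category.comp_id]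
  | m + 1 => by
    show (g ≫ iterComp g m) ≫ p = p ≫ gh ≫ iterComp gh m
    rw [Category.assoc, iterComp_congr h m, ← Category.assoc, h, Category.assoc]

end AuxLemmas

open Limits in
theorem cocyclic_quotient
    (Tl Tr : M ⥤ M) (ml : Tl ⋙ Tl ⟶ Tl) (ul : 𝟭 M ⟶ Tl)
    (mr : Tr ⋙ Tr ⟶ Tr) (ur : 𝟭 M ⟶ Tr)
    (P : M ⥤ C) (t : Tl ⋙ Tr ⟶ Tr ⋙ Tl) (i : Tl ⋙ P ⟶ Tr ⋙ P)
    (hml : ∀ X : M, Tl.map (ml.app X) ≫ ml.app X = ml.app (Tl.obj X) ≫ ml.app X)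
    (hul₁ : ∀ X : M, ul.app (Tl.obj X) ≫ ml.app X = 𝟙 (Tl.obj X))
    (hul₂ : ∀ X : M, Tl.map (ul.app X) ≫ ml.app X = 𝟙 (Tl.obj X))
    (hmr : ∀ X : M, Tr.map (mr.app X) ≫ mr.app X = mr.app (Tr.obj X) ≫ mr.app X)
    (hur₁ : ∀ X : M, ur.app (Tr.obj X) ≫ mr.app X = 𝟙 (Tr.obj X))
    (hur₂ : ∀ X : M, Tr.map (ur.app X) ≫ mr.app X = 𝟙 (Tr.obj X))
    (ht₁ : ∀ X : M, mr.app (Tl.obj X) ≫ t.app X =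
      Tr.map (t.app X) ≫ t.app (Tr.obj X) ≫ Tl.map (mr.app X))
    (ht₂ : ∀ X : M, Tr.map (ml.app X) ≫ t.app X =
      t.app (Tl.obj X) ≫ Tl.map (t.app X) ≫ ml.app (Tr.obj X))
    (ht₃ : ∀ X : M, ur.app (Tl.obj X) ≫ t.app X = Tl.map (ur.app X))
    (ht₄ : ∀ X : M, Tr.map (ul.app X) ≫ t.app X = ul.app (Tr.obj X))
    (hi₁ : ∀ X : M, P.map (ul.app X) ≫ i.app X = P.map (ur.app X))
    (hi₂ : ∀ X : M, P.map (ml.app X) ≫ i.app X =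
      i.app (Tl.obj X) ≫ P.map (t.app X) ≫ i.app (Tr.obj X) ≫ P.map (mr.app X))
    (X : M) (w : Tr.obj X ⟶ Tl.obj X)
    (hw₁ : ur.app X ≫ w = ul.app X)
    (hw₂ : mr.app X ≫ w = Tr.map w ≫ t.app X ≫ Tl.map w ≫ ml.app X)
    [hcoeq : ∀ n : ℕ, HasCoequalizer (iterComp (paraOp Tl Tr t P i w n) (n + 1))
      (𝟙 (P.obj (fpow Tl (n + 1) X)))] :
    -- the cofaces commute with the powers of the para-cocyclic operators
    (∀ n k : ℕ, k ≤ n →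
      P.map (coface Tl ul X (n + 1) k) ≫ iterComp (paraOp Tl Tr t P i w (n + 1)) (n + 2) =
        iterComp (paraOp Tl Tr t P i w n) (n + 1) ≫ P.map (coface Tl ul X (n + 1) k)) ∧
    -- the codegeneracies commute with the powers of the para-cocyclic operators
    (∀ n k : ℕ, k ≤ n →
      P.map (codeg Tl ml X n k) ≫ iterComp (paraOp Tl Tr t P i w n) (n + 1) =
        iterComp (paraOp Tl Tr t P i w (n + 1)) (n + 2) ≫ P.map (codeg Tl ml X n k)) ∧
    -- the induced cocyclic structure on the coequalizers
    (∃ (dh : ∀ n k : ℕ,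
        coequalizer (iterComp (paraOp Tl Tr t P i w n) (n + 1))
            (𝟙 (P.obj (fpow Tl (n + 1) X))) ⟶
          coequalizer (iterComp (paraOp Tl Tr t P i w (n + 1)) (n + 2))
            (𝟙 (P.obj (fpow Tl (n + 2) X))))
      (sh : ∀ n k : ℕ,
        coequalizer (iterComp (paraOp Tl Tr t P i w (n + 1)) (n + 2))
            (𝟙 (P.obj (fpow Tl (n + 2) X))) ⟶
          coequalizer (iterComp (paraOp Tl Tr t P i w n) (n + 1))
            (𝟙 (P.obj (fpow Tl (n + 1) X))))
      (wh : ∀ n : ℕ,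
        coequalizer (iterComp (paraOp Tl Tr t P i w n) (n + 1))
            (𝟙 (P.obj (fpow Tl (n + 1) X))) ⟶
          coequalizer (iterComp (paraOp Tl Tr t P i w n) (n + 1))
            (𝟙 (P.obj (fpow Tl (n + 1) X)))),
      (∀ n k : ℕ, k ≤ n + 1 →
        P.map (coface Tl ul X (n + 1) k) ≫ coequalizer.π _ _ = coequalizer.π _ _ ≫ dh n k) ∧
      (∀ n k : ℕ, k ≤ n →
        P.map (codeg Tl ml X n k) ≫ coequalizer.π _ _ = coequalizer.π _ _ ≫ sh n k) ∧
      (∀ n : ℕ, paraOp Tl Tr t P i w n ≫ coequalizer.π _ _ = coequalizer.π _ _ ≫ wh n) ∧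
      (∀ n : ℕ, iterComp (wh n) (n + 1) = 𝟙 _)) := by
  have hD := fun (n k : ℕ) (hk : k ≤ n + 1) =>
    powD Tl Tr ul ur P t i w ht₃ ht₄ hi₁ hw₁ n k hk
  have hS := fun (n k : ℕ) (hk : k ≤ n) =>
    powS Tl Tr ml mr P t i w ht₁ ht₂ hi₂ hw₂ n k hk
  refine ⟨fun n k hk => hD n k (by omega), hS, ?_⟩
  refine ⟨fun n k => coequalizer.desc
      (P.map (coface Tl ul X (n + 1) (min k (n + 1))) ≫ coequalizer.π _ _) ?_,
    fun n k => coequalizer.desc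
      (P.map (codeg Tl ml X n (min k n)) ≫ coequalizer.π _ _) ?_,
    fun n => coequalizer.desc (paraOp Tl Tr t P i w n ≫ coequalizer.π _ _) ?_,
    ?_, ?_, ?_, ?_⟩
  · rw [Category.id_comp, ← Category.assoc, ← hD n (min k (n + 1)) (Nat.min_le_right _ _),
      Category.assoc, coequalizer.condition, Category.id_comp]
  · rw [Category.id_comp, ← Category.assoc, ← hS n (min k n) (Nat.min_le_right _ _),
      Category.assoc, coequalizer.condition, Category.id_comp]
  · rw [Category.id_comp, ← Category.assoc, iterComp_comm, Category.assoc,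
      coequalizer.condition, Category.id_comp]
  · intro n k hk
    rw [coequalizer.π_desc, min_eq_left hk]
  · intro n k hk
    rw [coequalizer.π_desc, min_eq_left hk]
  · intro n
    rw [coequalizer.π_desc]
  · intro n
    have hcomm : paraOp Tl Tr t P i w n ≫ coequalizer.π
        (iterComp (paraOp Tl Tr t P i w n) (n + 1)) (𝟙 (P.obj (fpow Tl (n + 1) X))) =
        coequalizer.π (iterComp (paraOp Tl Tr t P i w n) (n + 1))
          (𝟙 (P.obj (fpow Tl (n + 1) X))) ≫
          coequalizer.desc (paraOp Tl Tr t P i w n ≫ coequalizer.π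
            (iterComp (paraOp Tl Tr t P i w n) (n + 1)) (𝟙 (P.obj (fpow Tl (n + 1) X))))
            (by rw [Category.id_comp, ← Category.assoc, iterComp_comm, Category.assoc,
              coequalizer.condition, Category.id_comp]) :=
      (coequalizer.π_desc _ _).symm
    rw [← cancel_epi (coequalizer.π (iterComp (paraOp Tl Tr t P i w n) (n + 1))
      (𝟙 (P.obj (fpow Tl (n + 1) X)))), ← iterComp_congr hcomm (n + 1),
      coequalizer.condition, Category.id_comp, Category.comp_id]

end Stmt5
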